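/- Let H and B be m-th order n-dimensional real symmetric tensors with m even and B positive definite (B x^m > 0 for all x ≠ 0), let f(x) = H x^m / B x^m with gradient g. Let η > 0, α_min > 0, and let {x_k} be a sequence of unit vectors satisfying the sufficient-decrease condition f(x_{k+1}) ≤ f(x_k) − η α_k ‖g(x_k)‖² with α_k ≥ α_min for all k. Then Σ_{k=1}^∞ ‖g(x_k)‖² < ∞, so lim_{k→∞} ‖g(x_k)‖ = 0; the sequence {x_k} has at least one accumulation point; and every accumulation point x_∞ of {x_k} satisfies H x_∞^{m−1} = λ_* B x_∞^{m−1} where λ_* = f(x_∞) = lim_{k→∞} f(x_k), i.e. x_∞ is a generalized eigenvector of (H, B) with generalized eigenvalue λ_*. -/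

import Mathlib

open Filter

/-- `A x^m` for an `m`-th order `n`-dimensional tensor `A`. -/
noncomputable def tpow {m n : ℕ} (A : (Fin m → Fin n) → ℝ) (x : EuclideanSpace ℝ (Fin n)) : ℝ :=
  ∑ g : Fin m → Fin n, A g * ∏ j, x (g j)

/-- `A x^{m-1}`, the vector with `i`-th entry `Σ_{i₂,…,i_m} a_{i,i₂,…,i_m} x_{i₂}⋯x_{i_m}`. -/
noncomputable def tvec {m n : ℕ} (hm : 0 < m) (A : (Fin m → Fin n) → ℝ)
    (x : EuclideanSpace ℝ (Fin n)) : EuclideanSpace ℝ (Fin n) :=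
  WithLp.toLp 2 <| fun i => ∑ g : Fin m → Fin n,
    if g ⟨0, hm⟩ = i then A g * ∏ j ∈ Finset.univ.erase ⟨0, hm⟩, x (g j) else 0

/-- A tensor is symmetric if its entries are invariant under index permutations. -/
def TensorSymmetric {m n : ℕ} (A : (Fin m → Fin n) → ℝ) : Prop :=
  ∀ (σ : Equiv.Perm (Fin m)) (g : Fin m → Fin n), A (g ∘ σ) = A g

section Aux

variable {m n : ℕ}

lemma tpow_continuous (A : (Fin m → Fin n) → ℝ) : Continuous (tpow A) := by
  unfold tpow
  exact continuous_finset_sum _ fun g _ => continuous_const.mul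
    (continuous_finset_prod _ fun j _ => (EuclideanSpace.proj (g j)).continuous)

lemma tvec_coord_continuous (hm : 0 < m) (A : (Fin m → Fin n) → ℝ) (i : Fin n) :
    Continuous (fun x => tvec hm A x i) := by
  unfold tvec
  change Continuous (fun x : EuclideanSpace ℝ (Fin n) => ∑ g : Fin m → Fin n,
    if g ⟨0, hm⟩ = i then A g * ∏ j ∈ Finset.univ.erase ⟨0, hm⟩, x (g j) else 0)
  refine continuous_finset_sum _ fun g _ => ?_
  by_cases h : g ⟨0, hm⟩ = i <;> simp only [h, if_true, if_false]
  · exact continuous_const.mul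
      (continuous_finset_prod _ fun j _ => (EuclideanSpace.proj (g j)).continuous)
  · exact continuous_const

lemma tvec_continuous (hm : 0 < m) (A : (Fin m → Fin n) → ℝ) :
    Continuous (fun x => tvec hm A x) := by
  have : (fun x => tvec hm A x) =
      (EuclideanSpace.equiv (Fin n) ℝ).symm ∘ (fun x i => tvec hm A x i) := rfl
  rw [this]
  exact (EuclideanSpace.equiv (Fin n) ℝ).symm.continuous.comp
    (continuous_pi fun i => tvec_coord_continuous hm A i)

lemma coord_hasFDerivAt (i : Fin n) (x : EuclideanSpace ℝ (Fin n)) :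
    HasFDerivAt (𝕜 := ℝ) (fun y : EuclideanSpace ℝ (Fin n) => y i) (EuclideanSpace.proj i) x :=
  (EuclideanSpace.proj i : EuclideanSpace ℝ (Fin n) →L[ℝ] ℝ).hasFDerivAt

lemma tpow_hasFDerivAt (A : (Fin m → Fin n) → ℝ) (x : EuclideanSpace ℝ (Fin n)) :
    HasFDerivAt (tpow A)
      (∑ g : Fin m → Fin n, A g • ∑ j : Fin m,
        (∏ j' ∈ Finset.univ.erase j, x (g j')) •
          (EuclideanSpace.proj (g j) : EuclideanSpace ℝ (Fin n) →L[ℝ] ℝ)) x := by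
  exact HasFDerivAt.fun_sum fun g _ =>
    (HasFDerivAt.finset_prod fun j _ => coord_hasFDerivAt (g j) x).const_mul (A g)

lemma swap_erase_prod (hm : 0 < m) (j : Fin m) (t : Fin m → ℝ) :
    ∏ j' ∈ Finset.univ.erase j, t (Equiv.swap (⟨0, hm⟩ : Fin m) j j') =
      ∏ j' ∈ Finset.univ.erase (⟨0, hm⟩ : Fin m), t j' := by
  set z : Fin m := ⟨0, hm⟩
  refine Finset.prod_nbij' (fun a => Equiv.swap z j a) (fun a => Equiv.swap z j a)
    ?_ ?_ ?_ ?_ ?_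
  · intro a ha
    simp only [Finset.mem_erase, Finset.mem_univ, and_true] at ha ⊢
    intro h
    apply ha
    have := congrArg (Equiv.swap z j) h
    simpa using this
  · intro a ha
    simp only [Finset.mem_erase, Finset.mem_univ, and_true] at ha ⊢
    intro h
    apply ha
    have := congrArg (Equiv.swap z j) h
    simpa using this
  · intro a _; simp
  · intro a _; simp
  · intro a _; rfl

lemma key_identity (hm : 0 < m) (A : (Fin m → Fin n) → ℝ) (hA : TensorSymmetric A)
    (x v : EuclideanSpace ℝ (Fin n)) :
    ∑ g : Fin m → Fin n, A g * ∑ j : Fin m,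
        (∏ j' ∈ Finset.univ.erase j, x (g j')) * v (g j)
      = (m : ℝ) * ∑ i, tvec hm A x i * v i := by
  set z : Fin m := ⟨0, hm⟩
  have hS : ∑ i, tvec hm A x i * v i
      = ∑ g : Fin m → Fin n, A g * ((∏ j' ∈ Finset.univ.erase z, x (g j')) * v (g z)) := by
    unfold tvec
    simp_rw [Finset.sum_mul]
    rw [Finset.sum_comm]
    refine Finset.sum_congr rfl fun g _ => ?_
    simp [ite_mul, mul_assoc]
    exact Or.inl rfl
  rw [hS]
  simp_rw [Finset.mul_sum]
  rw [Finset.sum_comm]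
  have hj : ∀ j : Fin m,
      (∑ g : Fin m → Fin n, A g * ((∏ j' ∈ Finset.univ.erase j, x (g j')) * v (g j)))
        = ∑ g : Fin m → Fin n, A g * ((∏ j' ∈ Finset.univ.erase z, x (g j')) * v (g z)) := by
    intro j
    refine (Fintype.sum_equiv
      (Equiv.arrowCongr (Equiv.swap z j) (Equiv.refl (Fin n))) _ _ ?_).symm
    intro g
    have he : (Equiv.arrowCongr (Equiv.swap z j) (Equiv.refl (Fin n))) g
        = g ∘ Equiv.swap z j := by ext a; simp
    rw [he]
    have h1 : A (g ∘ Equiv.swap z j) = A g := hA _ g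
    have h2 := swap_erase_prod hm j (fun j' => x (g j'))
    simp only [Function.comp_apply]
    rw [h1, Equiv.swap_apply_right, h2]
  calc ∑ j : Fin m, ∑ g : Fin m → Fin n,
        A g * ((∏ j' ∈ Finset.univ.erase j, x (g j')) * v (g j))
      = ∑ _j : Fin m, ∑ g : Fin m → Fin n,
        A g * ((∏ j' ∈ Finset.univ.erase z, x (g j')) * v (g z)) :=
        Finset.sum_congr rfl fun j _ => hj j
    _ = (m : ℝ) * ∑ g : Fin m → Fin n,
        A g * ((∏ j' ∈ Finset.univ.erase z, x (g j')) * v (g z)) := by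
        rw [Finset.sum_const, Finset.card_univ, Fintype.card_fin, nsmul_eq_mul]
    _ = ∑ g : Fin m → Fin n,
        (m : ℝ) * (A g * ((∏ j' ∈ Finset.univ.erase z, x (g j')) * v (g z))) := by
        rw [Finset.mul_sum]

lemma tpow_hasGradientAt (hm : 0 < m) (A : (Fin m → Fin n) → ℝ) (hA : TensorSymmetric A)
    (x : EuclideanSpace ℝ (Fin n)) :
    HasGradientAt (tpow A) ((m : ℝ) • tvec hm A x) x := by
  rw [hasGradientAt_iff_hasFDerivAt]
  refine (tpow_hasFDerivAt A x).congr_fderiv ?_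
  ext v
  rw [InnerProductSpace.toDual_apply_apply, real_inner_smul_left, PiLp.inner_apply]
  simp only [RCLike.inner_apply, conj_trivial, ContinuousLinearMap.sum_apply,
    ContinuousLinearMap.smul_apply, smul_eq_mul]
  simp_rw [mul_comm (v _) (tvec hm A x _)]
  rw [← key_identity hm A hA x v]
  rfl

lemma rayleigh_hasGradientAt (hm : 0 < m) (H B : (Fin m → Fin n) → ℝ)
    (hH : TensorSymmetric H) (hB : TensorSymmetric B)
    (y : EuclideanSpace ℝ (Fin n)) (hq : tpow B y ≠ 0) :
    HasGradientAt (fun y => tpow H y / tpow B y)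
      (((m : ℝ) * (tpow B y)⁻¹) • tvec hm H y
        - ((m : ℝ) * tpow H y * (tpow B y ^ 2)⁻¹) • tvec hm B y) y := by
  have hHd : HasFDerivAt (tpow H)
      (InnerProductSpace.toDual ℝ _ ((m : ℝ) • tvec hm H y)) y :=
    (tpow_hasGradientAt hm H hH y).hasFDerivAt
  have hBd : HasFDerivAt (tpow B)
      (InnerProductSpace.toDual ℝ _ ((m : ℝ) • tvec hm B y)) y :=
    (tpow_hasGradientAt hm B hB y).hasFDerivAt
  have hinv : HasFDerivAt (fun z => (tpow B z)⁻¹)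
      ((-(tpow B y ^ 2)⁻¹) • InnerProductSpace.toDual ℝ _ ((m : ℝ) • tvec hm B y)) y :=
    (hasDerivAt_inv hq).comp_hasFDerivAt y hBd
  have hmul := hHd.mul hinv
  rw [hasGradientAt_iff_hasFDerivAt]
  have hfun : (fun z => tpow H z / tpow B z) = fun z => tpow H z * (tpow B z)⁻¹ := by
    funext z; rw [div_eq_mul_inv]
  rw [hfun]
  refine hmul.congr_fderiv ?_
  rw [map_sub, map_smul, map_smul, map_smul, map_smul]
  module

end Aux

theorem acsa_basic_convergence
    {m n : ℕ} (hm : 0 < m) (hme : Even m)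
    (H B : (Fin m → Fin n) → ℝ)
    (hH : TensorSymmetric H) (hB : TensorSymmetric B)
    (hBpd : ∀ z : EuclideanSpace ℝ (Fin n), z ≠ 0 → 0 < tpow B z)
    (η αmin : ℝ) (hη : 0 < η) (hαmin : 0 < αmin)
    (x : ℕ → EuclideanSpace ℝ (Fin n)) (α : ℕ → ℝ)
    (hunit : ∀ k, ‖x k‖ = 1)
    (hα : ∀ k, αmin ≤ α k)
    (hdec : ∀ k, tpow H (x (k + 1)) / tpow B (x (k + 1))
      ≤ tpow H (x k) / tpow B (x k)
        - η * α k * ‖gradient (fun y => tpow H y / tpow B y) (x k)‖ ^ 2) :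
    Summable (fun k => ‖gradient (fun y => tpow H y / tpow B y) (x k)‖ ^ 2) ∧
    Tendsto (fun k => ‖gradient (fun y => tpow H y / tpow B y) (x k)‖) atTop (nhds 0) ∧
    (∃ (xinf : EuclideanSpace ℝ (Fin n)) (φ : ℕ → ℕ), StrictMono φ ∧
      Tendsto (x ∘ φ) atTop (nhds xinf)) ∧
    (∀ xinf : EuclideanSpace ℝ (Fin n),
      (∃ φ : ℕ → ℕ, StrictMono φ ∧ Tendsto (x ∘ φ) atTop (nhds xinf)) →
      ∃ lam : ℝ,
        Tendsto (fun k => tpow H (x k) / tpow B (x k)) atTop (nhds lam) ∧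
        tpow H xinf / tpow B xinf = lam ∧
        ∀ i, tvec hm H xinf i = lam * tvec hm B xinf i) := by
  set f : EuclideanSpace ℝ (Fin n) → ℝ := fun y => tpow H y / tpow B y with hfdef
  set a : ℕ → ℝ := fun k => ‖gradient f (x k)‖ ^ 2 with hadef
  -- basic facts
  have hxne : ∀ k, x k ≠ 0 := fun k => by
    intro h; have := hunit k; rw [h, norm_zero] at this; norm_num at this
  have hqpos : ∀ k, 0 < tpow B (x k) := fun k => hBpd _ (hxne k)
  have hsphere : ∀ k, x k ∈ Metric.sphere (0 : EuclideanSpace ℝ (Fin n)) 1 := fun k => by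
    simp [mem_sphere_iff_norm, hunit k]
  have hcpt : IsCompact (Metric.sphere (0 : EuclideanSpace ℝ (Fin n)) 1) := isCompact_sphere 0 1
  have hsphere_ne : ∀ z ∈ Metric.sphere (0 : EuclideanSpace ℝ (Fin n)) 1, z ≠ 0 := by
    intro z hz h
    rw [mem_sphere_iff_norm, h] at hz; simp at hz
  have hfc : ContinuousOn f (Metric.sphere (0 : EuclideanSpace ℝ (Fin n)) 1) :=
    (tpow_continuous H).continuousOn.div (tpow_continuous B).continuousOn
      (fun z hz => (hBpd z (hsphere_ne z hz)).ne')
  obtain ⟨c, hcmem, hcmin⟩ := hcpt.exists_isMinOn ⟨x 0, hsphere 0⟩ hfc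
  have hlow : ∀ k, f c ≤ f (x k) := fun k => hcmin (hsphere k)
  -- step nonnegativity and antitonicity
  have hαpos : ∀ k, 0 < α k := fun k => lt_of_lt_of_le hαmin (hα k)
  have hstep : ∀ k, 0 ≤ η * α k * a k := fun k =>
    mul_nonneg (mul_nonneg hη.le (hαpos k).le) (sq_nonneg _)
  have hanti : Antitone (fun k => f (x k)) := antitone_nat_of_succ_le fun k => by
    have := hdec k
    have h2 := hstep k
    simp only [hfdef, hadef] at this h2 ⊢
    linarith
  have hBdd : BddBelow (Set.range fun k => f (x k)) :=
    ⟨f c, by rintro _ ⟨k, rfl⟩; exact hlow k⟩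
  set L : ℝ := ⨅ k, f (x k) with hLdef
  have hfL : Tendsto (fun k => f (x k)) atTop (nhds L) := tendsto_atTop_ciInf hanti hBdd
  -- telescoping bound
  have htel : ∀ N, ∑ k ∈ Finset.range N, η * α k * a k ≤ f (x 0) - f (x N) := by
    intro N
    induction N with
    | zero => simp
    | succ N ih =>
      rw [Finset.sum_range_succ]
      have := hdec N
      simp only [hfdef, hadef] at this ⊢
      linarith
  have hpart : ∀ N, ∑ k ∈ Finset.range N, a k ≤ (f (x 0) - f c) / (η * αmin) := by
    intro N
    rw [le_div_iff₀ (by positivity)]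
    have h1 : (∑ k ∈ Finset.range N, a k) * (η * αmin)
        ≤ ∑ k ∈ Finset.range N, η * α k * a k := by
      rw [Finset.sum_mul]
      refine Finset.sum_le_sum fun k _ => ?_
      have hak : 0 ≤ a k := sq_nonneg _
      have hle : η * αmin ≤ η * α k := mul_le_mul_of_nonneg_left (hα k) hη.le
      calc a k * (η * αmin) = (η * αmin) * a k := mul_comm _ _
        _ ≤ (η * α k) * a k := mul_le_mul_of_nonneg_right hle hak
    have h2 := htel N
    have h3 := hlow N
    linarith
  have hsum : Summable a :=
    summable_of_sum_range_le (fun k => sq_nonneg _) hpart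
  -- norms tend to zero
  have htn : Tendsto (fun k => ‖gradient f (x k)‖) atTop (nhds 0) := by
    have ht2 : Tendsto a atTop (nhds 0) := hsum.tendsto_atTop_zero
    have hsq : Tendsto (fun k => Real.sqrt (a k)) atTop (nhds (Real.sqrt 0)) :=
      (Real.continuous_sqrt.tendsto 0).comp ht2
    rw [Real.sqrt_zero] at hsq
    convert hsq using 2 with k
    rw [hadef]
    exact (Real.sqrt_sq (norm_nonneg _)).symm
  refine ⟨hsum, htn, ?_, ?_⟩
  · -- accumulation point
    obtain ⟨xinf, _, φ, hφ, hconv⟩ := hcpt.tendsto_subseq hsphere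
    exact ⟨xinf, φ, hφ, hconv⟩
  · -- accumulation points are eigenvectors
    rintro xinf ⟨φ, hφ, hconv⟩
    have hxinf_norm : ‖xinf‖ = 1 := by
      have h1 : Tendsto (fun k => ‖(x ∘ φ) k‖) atTop (nhds ‖xinf‖) :=
        (continuous_norm.tendsto xinf).comp hconv
      have h2 : (fun k => ‖(x ∘ φ) k‖) = fun _ => (1 : ℝ) := funext fun k => hunit (φ k)
      rw [h2] at h1
      exact tendsto_nhds_unique h1 tendsto_const_nhds
    have hxinf_ne : xinf ≠ 0 := by
      intro h; rw [h, norm_zero] at hxinf_norm; norm_num at hxinf_norm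
    have hq : 0 < tpow B xinf := hBpd xinf hxinf_ne
    have hcf : ContinuousAt f xinf :=
      ((tpow_continuous H).continuousAt).div ((tpow_continuous B).continuousAt) hq.ne'
    have hsub : Tendsto (fun k => f (x (φ k))) atTop (nhds L) :=
      hfL.comp hφ.tendsto_atTop
    have hval : Tendsto (fun k => f (x (φ k))) atTop (nhds (f xinf)) :=
      hcf.tendsto.comp hconv
    have hfeq : f xinf = L := tendsto_nhds_unique hval hsub
    refine ⟨L, hfL, hfeq, ?_⟩
    -- gradient vanishes at xinf
    set Gf : EuclideanSpace ℝ (Fin n) → EuclideanSpace ℝ (Fin n) := fun y =>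
      ((m : ℝ) * (tpow B y)⁻¹) • tvec hm H y
        - ((m : ℝ) * tpow H y * (tpow B y ^ 2)⁻¹) • tvec hm B y with hGdef
    have hgrad_eq : ∀ y : EuclideanSpace ℝ (Fin n), tpow B y ≠ 0 → gradient f y = Gf y :=
      fun y hy => (rayleigh_hasGradientAt hm H B hH hB y hy).gradient
    have hGcont : ContinuousAt Gf xinf := by
      refine ContinuousAt.sub (ContinuousAt.fun_smul ?_ (tvec_continuous hm H).continuousAt)
        (ContinuousAt.fun_smul ?_ (tvec_continuous hm B).continuousAt)
      · exact continuousAt_const.mul ((tpow_continuous B).continuousAt.inv₀ hq.ne')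
      · exact (continuousAt_const.mul (tpow_continuous H).continuousAt).mul
          (((tpow_continuous B).continuousAt.pow 2).inv₀ (pow_ne_zero 2 hq.ne'))
    have hGlim : Tendsto (fun k => Gf (x (φ k))) atTop (nhds (Gf xinf)) :=
      hGcont.tendsto.comp hconv
    have hgz : Tendsto (fun k => gradient f (x k)) atTop
        (nhds (0 : EuclideanSpace ℝ (Fin n))) :=
      tendsto_zero_iff_norm_tendsto_zero.mpr htn
    have hgz' : Tendsto (fun k => Gf (x (φ k))) atTop (nhds (0 : EuclideanSpace ℝ (Fin n))) := by
      have := hgz.comp hφ.tendsto_atTop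
      have heq : (fun k => gradient f (x (φ k))) = fun k => Gf (x (φ k)) :=
        funext fun k => hgrad_eq _ (hqpos (φ k)).ne'
      rwa [← heq]
    have hGzero : Gf xinf = 0 := tendsto_nhds_unique hGlim hgz'
    intro i
    have h0i : Gf xinf i = 0 := by rw [hGzero]; rfl
    have hmne : (m : ℝ) ≠ 0 := Nat.cast_ne_zero.mpr hm.ne'
    have hqne : tpow B xinf ≠ 0 := hq.ne'
    rw [hGdef] at h0i
    simp only [PiLp.sub_apply, PiLp.smul_apply, smul_eq_mul] at h0i
    rw [← hfeq, hfdef]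
    field_simp at h0i ⊢
    have h1 : ((m : ℝ) * tpow B xinf) *
        (tvec hm H xinf i * tpow B xinf - tpow H xinf * tvec hm B xinf i) = 0 := by
      linear_combination (tpow B xinf) * h0i
    rcases mul_eq_zero.mp h1 with h2 | h2
    · exact absurd h2 (mul_ne_zero hmne hqne)
    · linarith
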